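/- Let p be an odd prime with p ≡ 3 (mod 4) and let k be a unit modulo p of multiplicative order p−1 (a primitive root mod p). Then wt(p, k; p−1) ≤ (p+5)/4. Moreover, there exists a sequence i with deg(i) = (p−3)/4 and wt(p, k; i) ≤ (p+5)/4. -/

import Mathlib

/-- The set `Ω(i, λ) = { b₁k^{i₁} + ⋯ + b_r k^{i_r} mod n : |b_j| ≤ λ_j }` in `ℤ/nℤ`. -/
def OmegaSet (n : ℕ) (k : (ZMod n)ˣ) {r : ℕ} (i : Fin r → ℕ) (lam : Fin r → ℕ) :
    Set (ZMod n) :=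
  { x | ∃ b : Fin r → ℤ, (∀ j, |b j| ≤ (lam j : ℤ)) ∧
      x = ∑ j, (b j : ZMod n) * ((k ^ i j : (ZMod n)ˣ) : ZMod n) }

/-- A `sequence`: a strictly decreasing tuple `α−1 ≥ i₁ > i₂ > ⋯ > i_r ≥ 0`. -/
def IsSeq (α : ℕ) {r : ℕ} (i : Fin r → ℕ) : Prop :=
  (∀ j, i j ≤ α - 1) ∧ StrictAnti i

/-- `wt(n, k; i)`: the minimal total weight `λ₁ + ⋯ + λ_r` over tuples `λ`
with `Ω(i,λ) = ℤ/nℤ`. -/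
noncomputable def wtSeq (n : ℕ) (k : (ZMod n)ˣ) {r : ℕ} (i : Fin r → ℕ) : ℕ :=
  sInf { s | ∃ lam : Fin r → ℕ, OmegaSet n k i lam = Set.univ ∧ ∑ j, lam j = s }

/-- The maximal sequence `Δ : α−1 > α−2 > ⋯ > 1 > 0`. -/
def DeltaSeq (α : ℕ) : Fin α → ℕ := fun j => α - 1 - (j : ℕ)

/-- `wt(n, k; α) := wt(n, k; Δ)`. -/
noncomputable def wtAlpha (n : ℕ) (k : (ZMod n)ˣ) (α : ℕ) : ℕ :=
  wtSeq n k (DeltaSeq α)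

/-- The degree of a sequence: its largest entry. -/
noncomputable def degSeq {r : ℕ} (i : Fin r → ℕ) : ℕ := sSup (Set.range i)

/-- The codegree of a sequence: its smallest nonzero entry. -/
noncomputable def codegSeq {r : ℕ} (i : Fin r → ℕ) : ℕ :=
  sInf { v | v ∈ Set.range i ∧ v ≠ 0 }

/-- A minimal prime sequence realizing `wt(n,k;α)`: a reduced sequence (i.e. one
containing `0`) of weight `wt(n,k;α)` such that no proper reduced subsequence
has weight `wt(n,k;α)`. -/
def IsMinimalPrimeSeq (n : ℕ) (k : (ZMod n)ˣ) (α : ℕ) {r : ℕ} (i : Fin r → ℕ) : Prop :=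
  IsSeq α i ∧ 0 ∈ Set.range i ∧ wtSeq n k i = wtAlpha n k α ∧
    ∀ (q : ℕ) (i₀ : Fin q → ℕ), IsSeq α i₀ → 0 ∈ Set.range i₀ →
      Set.range i₀ ⊆ Set.range i → Set.range i₀ ≠ Set.range i →
      wtSeq n k i₀ ≠ wtAlpha n k α

/-- `deg(n,k;α)`: the smallest degree of a minimal prime sequence realizing `wt(n,k;α)`. -/
noncomputable def degNK (n : ℕ) (k : (ZMod n)ˣ) (α : ℕ) : ℕ :=
  sInf { d | ∃ (r : ℕ) (i : Fin r → ℕ), IsMinimalPrimeSeq n k α i ∧ degSeq i = d }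

/-- Core covering lemma: if `p = 4t+3` is prime and `k` is a primitive root, then every
`x : ZMod p` is `e₁ k^a + e₂ k^b` with `a, b ≤ t`, `|e₁|, |e₂| ≤ 1`, and `e₂ = 0` if `a = b`. -/
lemma cover_lemma (p t : ℕ) (hp : p.Prime) (hpt : p = 4 * t + 3)
    (k : (ZMod p)ˣ) (hk : orderOf k = p - 1) (x : ZMod p) :
    ∃ (a b : ℕ) (e₁ e₂ : ℤ), a ≤ t ∧ b ≤ t ∧ |e₁| ≤ 1 ∧ |e₂| ≤ 1 ∧ (a = b → e₂ = 0) ∧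
      x = (e₁ : ZMod p) * ((k ^ a : (ZMod p)ˣ) : ZMod p)
        + (e₂ : ZMod p) * ((k ^ b : (ZMod p)ˣ) : ZMod p) := by
  haveI : Fact p.Prime := ⟨hp⟩
  haveI : NeZero p := ⟨by omega⟩
  set K : ZMod p := (k : ZMod p) with hKdef
  have hgK : ∀ m : ℕ, ((k ^ m : (ZMod p)ˣ) : ZMod p) = K ^ m := fun m =>
    Units.val_pow_eq_pow_val k m
  have hordK : orderOf K = p - 1 := by rw [hKdef, orderOf_units, hk]
  have hK0 : K ≠ 0 := Units.ne_zero k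
  have h2 : (2 : ZMod p) ≠ 0 := by
    intro h2
    have hdvd : p ∣ 2 := by
      exact_mod_cast (CharP.cast_eq_zero_iff (ZMod p) p 2).mp (by exact_mod_cast h2)
    have := Nat.le_of_dvd (by norm_num) hdvd
    omega
  have hinj' : ∀ a b : ℕ, a ≤ b → b < p - 1 → K ^ a = K ^ b → a = b := by
    intro a b hab hb h
    have hba : b = a + (b - a) := by omega
    have hmul : K ^ a * 1 = K ^ a * K ^ (b - a) := by
      rw [mul_one, ← pow_add, ← hba, h]
    have h1 : K ^ (b - a) = 1 := (mul_left_cancel₀ (pow_ne_zero a hK0) hmul).symm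
    have hdvd := orderOf_dvd_of_pow_eq_one h1
    rw [hordK] at hdvd
    have := Nat.eq_zero_of_dvd_of_lt hdvd (by omega)
    omega
  have hginj : ∀ a b : ℕ, a ≤ t → b ≤ t → K ^ a = K ^ b → a = b := by
    intro a b ha hb h
    rcases le_total a b with hle | hle
    · exact hinj' a b hle (by omega) h
    · exact (hinj' b a hle (by omega) h.symm).symm
  have hgneg : ∀ a b : ℕ, a ≤ t → b ≤ t → K ^ a ≠ -K ^ b := by
    intro a b ha hb h
    have hsq : K ^ (2 * a) = K ^ (2 * b) := by
      have h' : (K ^ a) ^ 2 = (-K ^ b) ^ 2 := by rw [h]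
      rw [neg_sq, ← pow_mul, ← pow_mul, mul_comm a 2, mul_comm b 2] at h'
      exact h'
    have hab : 2 * a = 2 * b := by
      rcases le_total (2 * a) (2 * b) with hle | hle
      · exact hinj' _ _ hle (by omega) hsq
      · exact (hinj' _ _ hle (by omega) hsq.symm).symm
    have hab' : a = b := by omega
    subst hab'
    have hz : (2 : ZMod p) * K ^ a = 0 := by rw [two_mul]; nth_rewrite 1 [h]; ring
    rcases mul_eq_zero.mp hz with h' | h'
    · exact h2 h'
    · exact pow_ne_zero a hK0 h'
  by_cases hx0 : x = 0
  · exact ⟨0, 0, 0, 0, by omega, by omega, by norm_num, by norm_num, fun _ => rfl, by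
      simp [hx0]⟩
  by_cases hx1 : ∃ a, a ≤ t ∧ x = K ^ a
  · obtain ⟨a, ha, hxa⟩ := hx1
    exact ⟨a, a, 1, 0, ha, ha, by norm_num, by norm_num, fun _ => rfl, by
      simp [hgK, hxa]⟩
  by_cases hx2 : ∃ a, a ≤ t ∧ x = -K ^ a
  · obtain ⟨a, ha, hxa⟩ := hx2
    refine ⟨a, a, -1, 0, ha, ha, by norm_num, by norm_num, fun _ => rfl, ?_⟩
    rw [hxa]
    push_cast
    ring
  push_neg at hx1 hx2
  -- the pigeonhole argument
  classical
  set A : Finset (ZMod p) := (Finset.range (t + 1)).image (fun m => K ^ m) with hAdef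
  have hmemA : ∀ y, y ∈ A ↔ ∃ a, a ≤ t ∧ y = K ^ a := by
    intro y
    simp only [hAdef, Finset.mem_image, Finset.mem_range]
    constructor
    · rintro ⟨a, ha, rfl⟩; exact ⟨a, by omega, rfl⟩
    · rintro ⟨a, ha, rfl⟩; exact ⟨a, by omega, rfl⟩
  have hcardA : A.card = t + 1 := by
    rw [hAdef, Finset.card_image_of_injOn, Finset.card_range]
    intro a ha b hb h
    simp only [Finset.coe_range, Set.mem_Iio] at ha hb
    exact hginj a b (by omega) (by omega) h
  set C : Finset (ZMod p) := A ∪ A.image (fun y => -y) with hCdef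
  set D : Finset (ZMod p) := A.image (fun y => x - y) ∪ A.image (fun y => x + y) with hDdef
  have hcardC : C.card = 2 * t + 2 := by
    rw [hCdef, Finset.card_union_of_disjoint, hcardA,
      Finset.card_image_of_injective _ neg_injective, hcardA]
    · ring
    · rw [Finset.disjoint_left]
      intro y hy hy'
      obtain ⟨a, ha, rfl⟩ := (hmemA y).mp hy
      simp only [Finset.mem_image] at hy'
      obtain ⟨z, hz, hzy⟩ := hy'
      obtain ⟨b, hb, rfl⟩ := (hmemA z).mp hz
      exact hgneg a b ha hb hzy.symm
  have hcardD : D.card = 2 * t + 2 := by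
    rw [hDdef, Finset.card_union_of_disjoint,
      Finset.card_image_of_injective _ sub_right_injective,
      Finset.card_image_of_injective _ (add_right_injective x), hcardA]
    · ring
    · rw [Finset.disjoint_left]
      intro y hy hy'
      simp only [Finset.mem_image] at hy hy'
      obtain ⟨z, hz, hzy⟩ := hy
      obtain ⟨w, hw, hwy⟩ := hy'
      obtain ⟨a, ha, rfl⟩ := (hmemA z).mp hz
      obtain ⟨b, hb, rfl⟩ := (hmemA w).mp hw
      have heq : K ^ b = -K ^ a := by linear_combination hwy - hzy
      exact hgneg b a hb ha heq
  have h0C : (0 : ZMod p) ∉ C := by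
    intro h0
    rcases Finset.mem_union.mp h0 with h | h
    · obtain ⟨a, ha, hza⟩ := (hmemA 0).mp h
      exact pow_ne_zero a hK0 hza.symm
    · simp only [Finset.mem_image] at h
      obtain ⟨z, hz, hzy⟩ := h
      obtain ⟨a, ha, rfl⟩ := (hmemA z).mp hz
      exact pow_ne_zero a hK0 (neg_eq_zero.mp hzy)
  have h0D : (0 : ZMod p) ∉ D := by
    intro h0
    rcases Finset.mem_union.mp h0 with h | h
    · simp only [Finset.mem_image] at h
      obtain ⟨z, hz, hzy⟩ := h
      obtain ⟨a, ha, rfl⟩ := (hmemA z).mp hz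
      exact hx1 a ha (by linear_combination hzy)
    · simp only [Finset.mem_image] at h
      obtain ⟨z, hz, hzy⟩ := h
      obtain ⟨a, ha, rfl⟩ := (hmemA z).mp hz
      exact hx2 a ha (by linear_combination hzy)
  have hsub : C ∪ D ⊆ Finset.univ.erase (0 : ZMod p) := by
    intro y hy
    rw [Finset.mem_erase]
    refine ⟨?_, Finset.mem_univ y⟩
    rintro rfl
    rcases Finset.mem_union.mp hy with h | h
    · exact h0C h
    · exact h0D h
  have hcardU : (C ∪ D).card ≤ p - 1 := by
    have h1 := Finset.card_le_card hsub
    rw [Finset.card_erase_of_mem (Finset.mem_univ 0), Finset.card_univ, ZMod.card p] at h1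
    exact h1
  have hinter : 1 < (C ∩ D).card := by
    have := Finset.card_union_add_card_inter C D
    omega
  obtain ⟨y₁, hy₁, y₂, hy₂, hne⟩ := Finset.one_lt_card.mp hinter
  have hkey : ∀ y ∈ C ∩ D,
      (∃ a b : ℕ, a ≤ t ∧ b ≤ t ∧ a ≠ b ∧ ∃ e₁ e₂ : ℤ, |e₁| ≤ 1 ∧ |e₂| ≤ 1 ∧
        x = (e₁ : ZMod p) * K ^ a + (e₂ : ZMod p) * K ^ b) ∨ y + y = x := by
    intro y hy
    obtain ⟨hyC, hyD⟩ := Finset.mem_inter.mp hy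
    have hC' : ∃ a ε, a ≤ t ∧ (ε = (1:ℤ) ∨ ε = -1) ∧ y = (ε : ZMod p) * K ^ a := by
      rcases Finset.mem_union.mp hyC with h | h
      · obtain ⟨a, ha, hya⟩ := (hmemA y).mp h
        exact ⟨a, 1, ha, Or.inl rfl, by rw [hya]; push_cast; ring⟩
      · simp only [Finset.mem_image] at h
        obtain ⟨z, hz, hzy⟩ := h
        obtain ⟨a, ha, rfl⟩ := (hmemA z).mp hz
        exact ⟨a, -1, ha, Or.inr rfl, by rw [← hzy]; push_cast; ring⟩
    have hD' : ∃ b ε', b ≤ t ∧ (ε' = (1:ℤ) ∨ ε' = -1) ∧ x - y = (ε' : ZMod p) * K ^ b := by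
      rcases Finset.mem_union.mp hyD with h | h
      · simp only [Finset.mem_image] at h
        obtain ⟨z, hz, hzy⟩ := h
        obtain ⟨b, hb, rfl⟩ := (hmemA z).mp hz
        exact ⟨b, 1, hb, Or.inl rfl, by push_cast; linear_combination hzy⟩
      · simp only [Finset.mem_image] at h
        obtain ⟨z, hz, hzy⟩ := h
        obtain ⟨b, hb, rfl⟩ := (hmemA z).mp hz
        exact ⟨b, -1, hb, Or.inr rfl, by push_cast; linear_combination hzy⟩
    obtain ⟨a, ε, ha, hε, hyv⟩ := hC'
    obtain ⟨b, ε', hb, hε', hxyv⟩ := hD'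
    have hxv : x = (ε : ZMod p) * K ^ a + (ε' : ZMod p) * K ^ b := by
      linear_combination hyv + hxyv
    by_cases hab : a = b
    · subst hab
      -- same exponent: either x = 0 (excluded) or y + y = x
      by_cases hεε : ε' = -ε
      · exfalso
        apply hx0
        rw [hxv, hεε]
        push_cast
        ring
      · have hεε' : ε' = ε := by
          rcases hε with rfl | rfl <;> rcases hε' with rfl | rfl <;>
            first
              | rfl
              | (exfalso; exact hεε (by norm_num))
        right
        rw [hyv, hxv, hεε']
    · left
      refine ⟨a, b, ha, hb, hab, ε, ε', ?_, ?_, hxv⟩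
      · rcases hε with rfl | rfl <;> norm_num
      · rcases hε' with rfl | rfl <;> norm_num
  rcases hkey y₁ hy₁ with ⟨a, b, ha, hb, hab, e₁, e₂, he₁, he₂, hxv⟩ | hd₁
  · exact ⟨a, b, e₁, e₂, ha, hb, he₁, he₂, fun h => absurd h hab, by exact_mod_cast hxv⟩
  rcases hkey y₂ hy₂ with ⟨a, b, ha, hb, hab, e₁, e₂, he₁, he₂, hxv⟩ | hd₂
  · exact ⟨a, b, e₁, e₂, ha, hb, he₁, he₂, fun h => absurd h hab, by exact_mod_cast hxv⟩
  exfalso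
  apply hne
  have h2y : (2 : ZMod p) * y₁ = (2 : ZMod p) * y₂ := by
    rw [two_mul, two_mul, hd₁, hd₂]
  exact mul_left_cancel₀ h2 h2y

/-- Any injective sequence whose range contains `{0, …, t}` has weight at most `t + 1`. -/
lemma wt_le_of_cover (p t : ℕ) (hp : p.Prime) (hpt : p = 4 * t + 3)
    (k : (ZMod p)ˣ) (hk : orderOf k = p - 1) {r : ℕ} (i : Fin r → ℕ)
    (hinj : Function.Injective i) (hcov : ∀ m, m ≤ t → ∃ j, i j = m) :
    wtSeq p k i ≤ t + 1 := by
  classical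
  set lam : Fin r → ℕ := fun j => if i j ≤ t then 1 else 0 with hlam
  have hsum : ∑ j, lam j = t + 1 := by
    have h1 : ∑ j, lam j = (Finset.univ.filter (fun j => i j ≤ t)).card := by
      simp [hlam, Finset.sum_ite, Finset.sum_const]
    have h3 := Finset.card_image_of_injOn
      (f := i) (s := Finset.univ.filter (fun j => i j ≤ t)) (fun a _ b _ h => hinj h)
    have h2 : (Finset.univ.filter (fun j => i j ≤ t)).image i = Finset.range (t + 1) := by
      ext m
      simp only [Finset.mem_image, Finset.mem_filter, Finset.mem_univ, true_and,
        Finset.mem_range]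
      constructor
      · rintro ⟨j, hj, rfl⟩; omega
      · intro hm
        obtain ⟨j, hj⟩ := hcov m (by omega)
        exact ⟨j, by omega, hj⟩
    rw [h2, Finset.card_range] at h3
    omega
  apply Nat.sInf_le
  refine ⟨lam, ?_, hsum⟩
  apply Set.eq_univ_iff_forall.mpr
  intro x
  obtain ⟨a, b, e₁, e₂, ha, hb, he₁, he₂, habe, hx⟩ := cover_lemma p t hp hpt k hk x
  obtain ⟨ja, hja⟩ := hcov a ha
  obtain ⟨jb, hjb⟩ := hcov b hb
  refine ⟨fun j => (if i j = a then e₁ else 0) + (if i j = b then e₂ else 0), ?_, ?_⟩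
  · intro j
    dsimp only
    by_cases hjt : i j ≤ t
    · have hl : lam j = 1 := if_pos hjt
      rw [hl]
      by_cases h1 : i j = a <;> by_cases h2 : i j = b
      · have hab : a = b := h1.symm.trans h2
        rw [if_pos h1, if_pos h2, habe hab, add_zero]
        exact_mod_cast he₁
      · rw [if_pos h1, if_neg h2, add_zero]; exact_mod_cast he₁
      · rw [if_neg h1, if_pos h2, zero_add]; exact_mod_cast he₂
      · rw [if_neg h1, if_neg h2, add_zero]; norm_num
    · have hl : lam j = 0 := if_neg hjt
      rw [hl]
      have h1 : i j ≠ a := by omega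
      have h2 : i j ≠ b := by omega
      rw [if_neg h1, if_neg h2, add_zero]
      norm_num
  · have hterm : ∀ j : Fin r,
        ((((if i j = a then e₁ else 0) + (if i j = b then e₂ else 0) : ℤ)) : ZMod p)
          * ((k ^ i j : (ZMod p)ˣ) : ZMod p)
        = (if i j = a then (e₁ : ZMod p) * ((k ^ a : (ZMod p)ˣ) : ZMod p) else 0)
          + (if i j = b then (e₂ : ZMod p) * ((k ^ b : (ZMod p)ˣ) : ZMod p) else 0) := by
      intro j
      by_cases h1 : i j = a <;> by_cases h2 : i j = b
      · have hab : a = b := h1.symm.trans h2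
        have he2 : e₂ = 0 := habe hab
        subst hab
        rw [h1]
        simp [he2]
      · have hne : a ≠ b := fun h => h2 (h1.trans h)
        rw [h1]
        simp [hne]
      · have hne : b ≠ a := fun h => h1 (h2.trans h)
        rw [h2]
        simp [hne]
      · simp [h1, h2]
    have hsingle : ∀ (c : ℕ) (jc : Fin r), i jc = c → ∀ v : ZMod p,
        ∑ j, (if i j = c then v else 0) = v := by
      intro c jc hjc v
      rw [Finset.sum_eq_single_of_mem jc (Finset.mem_univ jc)]
      · rw [if_pos hjc]
      · intro j _ hjne
        rw [if_neg]
        intro h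
        exact hjne (hinj (h.trans hjc.symm))
    rw [Finset.sum_congr rfl (fun j _ => hterm j), Finset.sum_add_distrib,
      hsingle a ja hja, hsingle b jb hjb]
    exact hx

theorem wt_prime_three_mod_four (p : ℕ) (hp : p.Prime) (hp3 : p % 4 = 3)
    (k : (ZMod p)ˣ) (hk : orderOf k = p - 1) :
    wtAlpha p k (p - 1) ≤ (p + 5) / 4 ∧
    ∃ (r : ℕ) (i : Fin r → ℕ), 0 < r ∧ IsSeq (p - 1) i ∧
      degSeq i = (p - 3) / 4 ∧ wtSeq p k i ≤ (p + 5) / 4 := by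
  have hp2 : 2 ≤ p := hp.two_le
  have hp7 : p % 4 = 3 := hp3
  set t : ℕ := (p - 3) / 4 with htdef
  have hpt : p = 4 * t + 3 := by omega
  have hgoal : t + 1 ≤ (p + 5) / 4 := by omega
  constructor
  · have h := wt_le_of_cover p t hp hpt k hk (i := DeltaSeq (p - 1))
      (by
        intro j₁ j₂ h
        have b₁ := j₁.isLt
        have b₂ := j₂.isLt
        apply Fin.ext
        simp only [DeltaSeq] at h
        omega)
      (by
        intro m hm
        refine ⟨⟨p - 1 - 1 - m, by omega⟩, ?_⟩
        simp only [DeltaSeq]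
        omega)
    calc wtAlpha p k (p - 1) = wtSeq p k (DeltaSeq (p - 1)) := rfl
      _ ≤ t + 1 := h
      _ ≤ (p + 5) / 4 := hgoal
  · refine ⟨t + 1, fun j => t - (j : ℕ), Nat.succ_pos t, ⟨?_, ?_⟩, ?_, ?_⟩
    · intro j
      show t - (j : ℕ) ≤ p - 1 - 1
      omega
    · intro j₁ j₂ hlt
      have b₂ := j₂.isLt
      have hlt' : (j₁ : ℕ) < (j₂ : ℕ) := hlt
      show t - (j₂ : ℕ) < t - (j₁ : ℕ)
      omega
    · have hgr : IsGreatest (Set.range fun j : Fin (t + 1) => t - (j : ℕ)) t := by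
        constructor
        · exact ⟨⟨0, by omega⟩, by simp⟩
        · rintro y ⟨j, rfl⟩
          show t - (j : ℕ) ≤ t
          omega
      exact hgr.csSup_eq
    · refine le_trans (wt_le_of_cover p t hp hpt k hk _ ?_ ?_) hgoal
      · intro j₁ j₂ h
        have b₁ := j₁.isLt
        have b₂ := j₂.isLt
        apply Fin.ext
        have h' : t - (j₁ : ℕ) = t - (j₂ : ℕ) := h
        omega
      · intro m hm
        refine ⟨⟨t - m, by omega⟩, ?_⟩
        show t - (t - m) = m
        omega
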